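/- Let P : C^op → InfSL be an elementary doctrine. The elementary quotient completion Q_P is a category: objects are pairs (A, ρ) with ρ a P-equivalence relation over A; arrows [f] : (A,ρ) → (B,σ) are equivalence classes of arrows f : A → B in C with ρ ≤ P(f×f)(σ), where f ∼ g iff ⊤_A = P⟨f,g⟩(σ). Composition and identities are inherited from C and are well-defined on equivalence classes. Moreover Q_P has binary products: (A,ρ) × (B,σ) = (A×B, ρ⊠σ) where ρ⊠σ = P⟨pr1,pr3⟩(ρ) ∧ P⟨pr2,pr4⟩(σ), with projections [pr1] and [pr2]. -/

import Mathlib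

open CategoryTheory CategoryTheory.Limits Opposite

noncomputable section

universe w v u

namespace DoctrinePaper

variable {C : Type u} [Category.{v} C] [HasFiniteProducts C]

/-- The fiber of a primary doctrine `P : Cᵒᵖ ⥤ SemilatInfCat` over an object `A`. -/
abbrev Fib (P : Cᵒᵖ ⥤ SemilatInfCat.{w}) (A : C) : Type w :=
  ↥(P.obj (op A))

/-- Reindexing along an arrow `f : A ⟶ B`. -/
def rmap (P : Cᵒᵖ ⥤ SemilatInfCat.{w}) {A B : C} (f : A ⟶ B) :
    Fib P B → Fib P A :=
  fun x => (P.map f.op) x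

variable (P : Cᵒᵖ ⥤ SemilatInfCat.{w})

/-- An elementary doctrine: fibered equalities `δ A ∈ P (A ⨯ A)` such that
`E_e(α) = P⟨pr1,pr2⟩(α) ⊓ P⟨pr2,pr3⟩(δ A)` is left adjoint to reindexing along
`e = ⟨pr1,pr2,pr2⟩ : X ⨯ A ⟶ (X ⨯ A) ⨯ A`. -/
structure IsElementary where
  δ : ∀ A : C, Fib P (A ⨯ A)
  adj :
    ∀ (X A : C) (α : Fib P (X ⨯ A)) (β : Fib P ((X ⨯ A) ⨯ A)),
      (rmap P (prod.fst : (X ⨯ A) ⨯ A ⟶ X ⨯ A) α ⊓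
          rmap P (prod.lift (prod.fst ≫ prod.snd) prod.snd : (X ⨯ A) ⨯ A ⟶ A ⨯ A) (δ A) ≤ β)
        ↔ α ≤ rmap P (prod.lift (𝟙 (X ⨯ A)) prod.snd : X ⨯ A ⟶ (X ⨯ A) ⨯ A) β

/-- A `P`-equivalence relation over `A`. -/
structure IsEqRel (hE : IsElementary P) {A : C} (ρ : Fib P (A ⨯ A)) : Prop where
  refl : hE.δ A ≤ ρ
  symm : ρ = rmap P (prod.lift prod.snd prod.fst : A ⨯ A ⟶ A ⨯ A) ρ
  trans :
    rmap P (prod.fst : (A ⨯ A) ⨯ A ⟶ A ⨯ A) ρ ⊓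
        rmap P (prod.lift (prod.fst ≫ prod.snd) prod.snd : (A ⨯ A) ⨯ A ⟶ A ⨯ A) ρ ≤
      rmap P (prod.lift (prod.fst ≫ prod.fst) prod.snd : (A ⨯ A) ⨯ A ⟶ A ⨯ A) ρ

/-- An elementary existential doctrine, together with the induced left adjoints
`∃_f` along all arrows, satisfying the adjunction law, Frobenius reciprocity, and
the Beck–Chevalley condition along pullbacks of projections. -/
structure IsExistential extends IsElementary P where
  E : ∀ {A B : C}, (A ⟶ B) → Fib P A → Fib P B
  adjE : ∀ {A B : C} (f : A ⟶ B) (α : Fib P A) (β : Fib P B),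
    E f α ≤ β ↔ α ≤ rmap P f β
  frobenius : ∀ {A B : C} (f : A ⟶ B) (α : Fib P A) (β : Fib P B),
    E f (α ⊓ rmap P f β) = E f α ⊓ β
  beckChevalley : ∀ {B A A' : C} (f : A' ⟶ A) (β : Fib P (B ⨯ A)),
    E (prod.snd : B ⨯ A' ⟶ A') (rmap P (prod.map (𝟙 B) f) β) =
      rmap P f (E (prod.snd : B ⨯ A ⟶ A) β)

/-- Descent data for a relation `ρ` over `A`. -/
def Des {A : C} (ρ : Fib P (A ⨯ A)) : Set (Fib P A) :=
  {α | rmap P (prod.fst : A ⨯ A ⟶ A) α ⊓ ρ ≤ rmap P (prod.snd : A ⨯ A ⟶ A) α}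

/-- Comprehensive diagonals: `f = g` iff `⊤ = P⟨f,g⟩(δ)`. -/
def ComprehensiveDiagonals (hE : IsElementary P) : Prop :=
  ∀ {X A : C} (f g : X ⟶ A), f = g ↔ rmap P (prod.lift f g) (hE.δ A) = ⊤

/-- (Weak) comprehension structure. -/
structure Comprehension where
  cObj : ∀ {A : C}, Fib P A → C
  cArr : ∀ {A : C} (α : Fib P A), cObj α ⟶ A
  cTop : ∀ {A : C} (α : Fib P A), rmap P (cArr α) α = ⊤
  cUniv : ∀ {A : C} (α : Fib P A) {Y : C} (f : Y ⟶ A),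
    rmap P f α = ⊤ → ∃ k : Y ⟶ cObj α, k ≫ cArr α = f

/-- Full comprehension. -/
def Comprehension.Full (hC : Comprehension P) : Prop :=
  ∀ {A : C} (α β : Fib P A), α ≤ β ↔ rmap P (hC.cArr α) β = ⊤

/-- Strong comprehension: comprehension arrows are monic. -/
def Comprehension.Strong (hC : Comprehension P) : Prop :=
  ∀ {A : C} (α : Fib P A), Mono (hC.cArr α)

/-- `P`-injective arrow. -/
def PInj (hE : IsElementary P) {X A : C} (f : X ⟶ A) : Prop :=
  rmap P (prod.map f f) (hE.δ A) = hE.δ X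

/-- `P`-surjective arrow. -/
def PSurj (hEx : IsExistential P) {X A : C} (f : X ⟶ A) : Prop :=
  hEx.E f (⊤ : Fib P X) = ⊤

/-- The product relation `ρ ⊠ σ` on `(A ⨯ B) ⨯ (A ⨯ B)`. -/
def boxprod {A B : C} (ρ : Fib P (A ⨯ A)) (σ : Fib P (B ⨯ B)) :
    Fib P ((A ⨯ B) ⨯ (A ⨯ B)) :=
  rmap P (prod.map prod.fst prod.fst) ρ ⊓ rmap P (prod.map prod.snd prod.snd) σ

/-- The hom condition of the elementary quotient completion: `f : A ⟶ B`
represents an arrow `(A,ρ) ⟶ (B,σ)` iff `ρ ≤ P(f×f)(σ)`. -/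
def QHomC {A B : C} (ρ : Fib P (A ⨯ A)) (σ : Fib P (B ⨯ B)) (f : A ⟶ B) : Prop :=
  ρ ≤ rmap P (prod.map f f) σ

/-- The equivalence on representatives: `f ∼ g` iff `⊤ = P⟨f,g⟩(σ)`. -/
def QEq {A B : C} (σ : Fib P (B ⨯ B)) (f g : A ⟶ B) : Prop :=
  rmap P (prod.lift f g) σ = ⊤

section Aux

set_option linter.unusedSectionVars false

lemma rmap_id {A : C} (x : Fib P A) : rmap P (𝟙 A) x = x := by
  show (P.map (𝟙 (op A))) x = x
  rw [P.map_id]; rfl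

lemma rmap_comp {A B D : C} (f : A ⟶ B) (g : B ⟶ D) (x : Fib P D) :
    rmap P (f ≫ g) x = rmap P f (rmap P g x) := by
  show (P.map (g.op ≫ f.op)) x = _
  rw [P.map_comp]; rfl

lemma rmap_mono {A B : C} (f : A ⟶ B) {x y : Fib P B} (h : x ≤ y) :
    rmap P f x ≤ rmap P f y :=
  OrderHomClass.mono (show InfTopHom _ _ from P.map f.op) h

lemma rmap_inf {A B : C} (f : A ⟶ B) (x y : Fib P B) :
    rmap P f (x ⊓ y) = rmap P f x ⊓ rmap P f y :=
  map_inf (show InfTopHom _ _ from P.map f.op) x y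

lemma rmap_top {A B : C} (f : A ⟶ B) : rmap P f (⊤ : Fib P B) = ⊤ :=
  map_top (show InfTopHom _ _ from P.map f.op)

variable {P}
variable (hE : IsElementary P)

lemma counit (X A : C) (β : Fib P ((X ⨯ A) ⨯ A)) :
    rmap P (prod.fst : (X ⨯ A) ⨯ A ⟶ X ⨯ A)
        (rmap P (prod.lift (𝟙 (X ⨯ A)) prod.snd) β) ⊓
      rmap P (prod.lift (prod.fst ≫ prod.snd) prod.snd : (X ⨯ A) ⨯ A ⟶ A ⨯ A) (hE.δ A) ≤ β :=
  (hE.adj X A _ β).mpr le_rfl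

lemma refl_top {Y A : C} (h : Y ⟶ A) : rmap P (prod.lift h h) (hE.δ A) = ⊤ := by
  have h1 : (⊤ : Fib P (Y ⨯ A)) ≤ rmap P (prod.lift (𝟙 (Y ⨯ A)) prod.snd)
      (rmap P (prod.lift (prod.fst ≫ prod.snd) prod.snd : (Y ⨯ A) ⨯ A ⟶ A ⨯ A) (hE.δ A)) :=
    (hE.adj Y A ⊤ _).mp inf_le_right
  rw [← rmap_comp] at h1
  have e1 : (prod.lift (𝟙 (Y ⨯ A)) prod.snd) ≫
      (prod.lift (prod.fst ≫ prod.snd) prod.snd : (Y ⨯ A) ⨯ A ⟶ A ⨯ A) =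
      prod.lift prod.snd prod.snd := by
    apply Limits.prod.hom_ext <;> simp [prod.lift_fst, prod.lift_snd, prod.lift_fst_assoc, prod.lift_snd_assoc]
  rw [e1] at h1
  have e2 : (prod.lift (𝟙 Y) h) ≫ (prod.lift prod.snd prod.snd : Y ⨯ A ⟶ A ⨯ A) =
      prod.lift h h := by
    apply Limits.prod.hom_ext <;> simp [prod.lift_fst, prod.lift_snd, prod.lift_fst_assoc, prod.lift_snd_assoc]
  rw [← e2, rmap_comp]
  exact le_antisymm le_top (by
    calc (⊤ : Fib P Y) = rmap P (prod.lift (𝟙 Y) h) ⊤ := (rmap_top P _).symm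
      _ ≤ _ := rmap_mono P _ h1)

lemma subst {Y A : C} (u v : Y ⟶ A) (β : Fib P ((Y ⨯ A) ⨯ A)) :
    rmap P (prod.lift (prod.lift (𝟙 Y) u) u) β ⊓ rmap P (prod.lift u v) (hE.δ A) ≤
      rmap P (prod.lift (prod.lift (𝟙 Y) u) v) β := by
  have c := rmap_mono P (prod.lift (prod.lift (𝟙 Y) u) v) (counit hE Y A β)
  rw [rmap_inf, ← rmap_comp, ← rmap_comp] at c
  have e1 : (prod.lift (prod.lift (𝟙 Y) u) v) ≫
      ((prod.fst : (Y ⨯ A) ⨯ A ⟶ Y ⨯ A) ≫ prod.lift (𝟙 (Y ⨯ A)) prod.snd) =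
      prod.lift (prod.lift (𝟙 Y) u) u := by
    apply Limits.prod.hom_ext <;> simp [prod.lift_fst, prod.lift_snd, prod.lift_fst_assoc, prod.lift_snd_assoc]
  have e2 : (prod.lift (prod.lift (𝟙 Y) u) v) ≫
      (prod.lift (prod.fst ≫ prod.snd) prod.snd : (Y ⨯ A) ⨯ A ⟶ A ⨯ A) =
      prod.lift u v := by
    apply Limits.prod.hom_ext <;> simp [prod.lift_fst, prod.lift_snd, prod.lift_fst_assoc, prod.lift_snd_assoc]
  rw [Category.assoc, e1] at c
  rw [← rmap_comp, e2] at c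
  exact c

lemma delta_map {X A : C} (f : X ⟶ A) : hE.δ X ≤ rmap P (prod.map f f) (hE.δ A) := by
  set q : ((X ⨯ X) ⨯ X) ⨯ X ⟶ A ⨯ A :=
    prod.lift (prod.fst ≫ prod.snd ≫ f) (prod.snd ≫ f) with hq
  have S := subst hE (prod.fst : X ⨯ X ⟶ X) prod.snd (rmap P q (hE.δ A))
  rw [← rmap_comp, ← rmap_comp] at S
  have e1 : (prod.lift (prod.lift (𝟙 (X ⨯ X)) prod.fst) prod.fst) ≫ q =
      prod.lift (prod.fst ≫ f) (prod.fst ≫ f) := by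
    apply Limits.prod.hom_ext <;> simp [hq, prod.lift_fst, prod.lift_snd, prod.lift_fst_assoc, prod.lift_snd_assoc]
  have e2 : (prod.lift (prod.lift (𝟙 (X ⨯ X)) prod.fst) prod.snd) ≫ q =
      prod.map f f := by
    apply Limits.prod.hom_ext <;> simp [hq, prod.lift_fst, prod.lift_snd, prod.lift_fst_assoc, prod.lift_snd_assoc]
  have e3 : (prod.lift (prod.fst ≫ f) (prod.fst ≫ f) : X ⨯ X ⟶ A ⨯ A) =
      prod.lift (prod.fst ≫ f) (prod.fst ≫ f) := rfl
  rw [e1, e2] at S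
  have e4 : rmap P (prod.lift (prod.fst ≫ f) (prod.fst ≫ f) : X ⨯ X ⟶ A ⨯ A) (hE.δ A) = ⊤ :=
    refl_top hE _
  rw [e4] at S
  have e5 : (prod.lift prod.fst prod.snd : X ⨯ X ⟶ X ⨯ X) = 𝟙 _ := by
    apply Limits.prod.hom_ext <;> simp
  rw [e5, rmap_id] at S
  exact le_trans (le_inf le_top le_rfl) S

lemma qeq_refl {A B : C} {σ : Fib P (B ⨯ B)} (hσ : hE.δ B ≤ σ) (f : A ⟶ B) :
    QEq P σ f f :=
  top_le_iff.mp (by rw [← refl_top hE f]; exact rmap_mono P _ hσ)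

lemma qeq_symm {A B : C} {σ : Fib P (B ⨯ B)}
    (hσ : σ = rmap P (prod.lift prod.snd prod.fst : B ⨯ B ⟶ B ⨯ B) σ)
    {f g : A ⟶ B} (h : QEq P σ f g) : QEq P σ g f := by
  unfold QEq at *
  conv_lhs => rw [hσ]
  rw [← rmap_comp]
  have e : (prod.lift g f) ≫ (prod.lift prod.snd prod.fst : B ⨯ B ⟶ B ⨯ B) =
      prod.lift f g := by
    apply Limits.prod.hom_ext <;> simp [prod.lift_fst, prod.lift_snd, prod.lift_fst_assoc, prod.lift_snd_assoc]
  rw [e, h]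

lemma qeq_trans {A B : C} {σ : Fib P (B ⨯ B)}
    (hσ : rmap P (prod.fst : (B ⨯ B) ⨯ B ⟶ B ⨯ B) σ ⊓
        rmap P (prod.lift (prod.fst ≫ prod.snd) prod.snd : (B ⨯ B) ⨯ B ⟶ B ⨯ B) σ ≤
      rmap P (prod.lift (prod.fst ≫ prod.fst) prod.snd : (B ⨯ B) ⨯ B ⟶ B ⨯ B) σ)
    {f g h : A ⟶ B} (hfg : QEq P σ f g) (hgh : QEq P σ g h) : QEq P σ f h := by
  unfold QEq at *
  have T := rmap_mono P (prod.lift (prod.lift f g) h) hσ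
  rw [rmap_inf, ← rmap_comp, ← rmap_comp, ← rmap_comp] at T
  have e1 : (prod.lift (prod.lift f g) h) ≫ (prod.fst : (B ⨯ B) ⨯ B ⟶ B ⨯ B) =
      prod.lift f g := by simp [prod.lift_fst, prod.lift_snd, prod.lift_fst_assoc, prod.lift_snd_assoc]
  have e2 : (prod.lift (prod.lift f g) h) ≫
      (prod.lift (prod.fst ≫ prod.snd) prod.snd : (B ⨯ B) ⨯ B ⟶ B ⨯ B) =
      prod.lift g h := by apply Limits.prod.hom_ext <;> simp [prod.lift_fst, prod.lift_snd, prod.lift_fst_assoc, prod.lift_snd_assoc]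
  have e3 : (prod.lift (prod.lift f g) h) ≫
      (prod.lift (prod.fst ≫ prod.fst) prod.snd : (B ⨯ B) ⨯ B ⟶ B ⨯ B) =
      prod.lift f h := by apply Limits.prod.hom_ext <;> simp [prod.lift_fst, prod.lift_snd, prod.lift_fst_assoc, prod.lift_snd_assoc]
  rw [e1, e2, e3, hfg, hgh] at T
  exact top_le_iff.mp (le_trans (le_inf le_rfl le_rfl) T)

end Aux

/-- The elementary quotient completion `Q_P` is a category with
binary products: the relation `∼` on representatives is an equivalence relation,
identities and composition are well defined on equivalence classes, and
`(A ⨯ B, ρ ⊠ σ)` with the projections is a binary product of `(A,ρ)` and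
`(B,σ)`. -/
theorem quotient_completion_is_category_with_products (hE : IsElementary P) :
    (∀ {A B : C} (ρ : Fib P (A ⨯ A)) (σ : Fib P (B ⨯ B)),
        IsEqRel P hE ρ → IsEqRel P hE σ →
        (∀ f : A ⟶ B, QHomC P ρ σ f → QEq P σ f f) ∧
        (∀ f g : A ⟶ B, QHomC P ρ σ f → QHomC P ρ σ g →
          QEq P σ f g → QEq P σ g f) ∧
        (∀ f g h : A ⟶ B, QHomC P ρ σ f → QHomC P ρ σ g → QHomC P ρ σ h →
          QEq P σ f g → QEq P σ g h → QEq P σ f h)) ∧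
    (∀ {A : C} (ρ : Fib P (A ⨯ A)), IsEqRel P hE ρ → QHomC P ρ ρ (𝟙 A)) ∧
    (∀ {A B D : C} (ρ : Fib P (A ⨯ A)) (σ : Fib P (B ⨯ B)) (τ : Fib P (D ⨯ D)),
        IsEqRel P hE ρ → IsEqRel P hE σ → IsEqRel P hE τ →
        ∀ (f f' : A ⟶ B) (g g' : B ⟶ D),
          QHomC P ρ σ f → QHomC P ρ σ f' → QHomC P σ τ g → QHomC P σ τ g' →
          QHomC P ρ τ (f ≫ g) ∧
            (QEq P σ f f' → QEq P τ g g' → QEq P τ (f ≫ g) (f' ≫ g'))) ∧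
    (∀ {A B : C} (ρ : Fib P (A ⨯ A)) (σ : Fib P (B ⨯ B)),
        IsEqRel P hE ρ → IsEqRel P hE σ →
        IsEqRel P hE (boxprod P ρ σ) ∧
        QHomC P (boxprod P ρ σ) ρ prod.fst ∧
        QHomC P (boxprod P ρ σ) σ prod.snd ∧
        (∀ {T : C} (τ : Fib P (T ⨯ T)), IsEqRel P hE τ →
          ∀ (h : T ⟶ A) (k : T ⟶ B), QHomC P τ ρ h → QHomC P τ σ k →
            ∃ m : T ⟶ A ⨯ B, QHomC P τ (boxprod P ρ σ) m ∧
              QEq P ρ (m ≫ prod.fst) h ∧ QEq P σ (m ≫ prod.snd) k ∧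
              ∀ m' : T ⟶ A ⨯ B, QHomC P τ (boxprod P ρ σ) m' →
                QEq P ρ (m' ≫ prod.fst) h → QEq P σ (m' ≫ prod.snd) k →
                  QEq P (boxprod P ρ σ) m m')) := by
  refine ⟨?_, ?_, ?_, ?_⟩
  · intro A B ρ σ hρ hσ
    exact ⟨fun f _ => qeq_refl hE hσ.refl f,
      fun f g _ _ h => qeq_symm hσ.symm h,
      fun f g h _ _ _ h1 h2 => qeq_trans hσ.trans h1 h2⟩
  · intro A ρ hρ
    unfold QHomC
    rw [prod.map_id_id]
    exact le_of_eq (rmap_id P ρ).symm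
  · intro A B D ρ σ τ hρ hσ hτ f f' g g' hf hf' hg hg'
    constructor
    · unfold QHomC at *
      have e : prod.map (f ≫ g) (f ≫ g) = prod.map f f ≫ prod.map g g := by simp
      rw [e, rmap_comp]
      exact le_trans hf (rmap_mono P _ hg)
    · intro hff' hgg'
      have h1 : QEq P τ (f ≫ g) (f' ≫ g) := by
        unfold QEq QHomC at *
        have e : prod.lift (f ≫ g) (f' ≫ g) = prod.lift f f' ≫ prod.map g g := by
          apply Limits.prod.hom_ext <;> simp
        rw [e, rmap_comp]
        exact top_le_iff.mp (by rw [← hff']; exact rmap_mono P _ hg)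
      have h2 : QEq P τ (f' ≫ g) (f' ≫ g') := by
        unfold QEq at *
        have e : prod.lift (f' ≫ g) (f' ≫ g') = f' ≫ prod.lift g g' := by
          apply Limits.prod.hom_ext <;> simp
        rw [e, rmap_comp, hgg', rmap_top]
      exact qeq_trans hτ.trans h1 h2
  · intro A B ρ σ hρ hσ
    have hbox : IsEqRel P hE (boxprod P ρ σ) := by
      refine ⟨?_, ?_, ?_⟩
      · exact le_inf (le_trans (delta_map hE prod.fst) (rmap_mono P _ hρ.refl))
          (le_trans (delta_map hE prod.snd) (rmap_mono P _ hσ.refl))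
      · unfold boxprod
        have eA : (prod.lift prod.snd prod.fst : (A ⨯ B) ⨯ (A ⨯ B) ⟶ _) ≫
            prod.map prod.fst prod.fst =
            prod.map prod.fst prod.fst ≫ prod.lift prod.snd prod.fst := by
          apply Limits.prod.hom_ext <;> simp
        have eB : (prod.lift prod.snd prod.fst : (A ⨯ B) ⨯ (A ⨯ B) ⟶ _) ≫
            prod.map prod.snd prod.snd =
            prod.map prod.snd prod.snd ≫ prod.lift prod.snd prod.fst := by
          apply Limits.prod.hom_ext <;> simp
        rw [rmap_inf, ← rmap_comp, ← rmap_comp, eA, eB, rmap_comp, rmap_comp,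
          ← hρ.symm, ← hσ.symm]
      · have TA := rmap_mono P (prod.lift (prod.fst ≫ prod.map prod.fst prod.fst)
          (prod.snd ≫ prod.fst) :
            ((A ⨯ B) ⨯ (A ⨯ B)) ⨯ (A ⨯ B) ⟶ (A ⨯ A) ⨯ A) hρ.trans
        have TB := rmap_mono P (prod.lift (prod.fst ≫ prod.map prod.snd prod.snd)
          (prod.snd ≫ prod.snd) :
            ((A ⨯ B) ⨯ (A ⨯ B)) ⨯ (A ⨯ B) ⟶ (B ⨯ B) ⨯ B) hσ.trans
        rw [rmap_inf, ← rmap_comp, ← rmap_comp, ← rmap_comp] at TA TB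
        have a1 : (prod.lift (prod.fst ≫ prod.map prod.fst prod.fst) (prod.snd ≫ prod.fst) :
            ((A ⨯ B) ⨯ (A ⨯ B)) ⨯ (A ⨯ B) ⟶ (A ⨯ A) ⨯ A) ≫ prod.fst =
            prod.fst ≫ prod.map prod.fst prod.fst := by simp
        have a2 : (prod.lift (prod.fst ≫ prod.map prod.fst prod.fst) (prod.snd ≫ prod.fst) :
            ((A ⨯ B) ⨯ (A ⨯ B)) ⨯ (A ⨯ B) ⟶ (A ⨯ A) ⨯ A) ≫
            prod.lift (prod.fst ≫ prod.snd) prod.snd =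
            prod.lift (prod.fst ≫ prod.snd) prod.snd ≫ prod.map prod.fst prod.fst := by
          apply Limits.prod.hom_ext <;> simp
        have a3 : (prod.lift (prod.fst ≫ prod.map prod.fst prod.fst) (prod.snd ≫ prod.fst) :
            ((A ⨯ B) ⨯ (A ⨯ B)) ⨯ (A ⨯ B) ⟶ (A ⨯ A) ⨯ A) ≫
            prod.lift (prod.fst ≫ prod.fst) prod.snd =
            prod.lift (prod.fst ≫ prod.fst) prod.snd ≫ prod.map prod.fst prod.fst := by
          apply Limits.prod.hom_ext <;> simp
        have b1 : (prod.lift (prod.fst ≫ prod.map prod.snd prod.snd) (prod.snd ≫ prod.snd) :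
            ((A ⨯ B) ⨯ (A ⨯ B)) ⨯ (A ⨯ B) ⟶ (B ⨯ B) ⨯ B) ≫ prod.fst =
            prod.fst ≫ prod.map prod.snd prod.snd := by simp
        have b2 : (prod.lift (prod.fst ≫ prod.map prod.snd prod.snd) (prod.snd ≫ prod.snd) :
            ((A ⨯ B) ⨯ (A ⨯ B)) ⨯ (A ⨯ B) ⟶ (B ⨯ B) ⨯ B) ≫
            prod.lift (prod.fst ≫ prod.snd) prod.snd =
            prod.lift (prod.fst ≫ prod.snd) prod.snd ≫ prod.map prod.snd prod.snd := by
          apply Limits.prod.hom_ext <;> simp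
        have b3 : (prod.lift (prod.fst ≫ prod.map prod.snd prod.snd) (prod.snd ≫ prod.snd) :
            ((A ⨯ B) ⨯ (A ⨯ B)) ⨯ (A ⨯ B) ⟶ (B ⨯ B) ⨯ B) ≫
            prod.lift (prod.fst ≫ prod.fst) prod.snd =
            prod.lift (prod.fst ≫ prod.fst) prod.snd ≫ prod.map prod.snd prod.snd := by
          apply Limits.prod.hom_ext <;> simp
        rw [a1, a2, a3, rmap_comp, rmap_comp, rmap_comp] at TA
        rw [b1, b2, b3, rmap_comp, rmap_comp, rmap_comp] at TB
        unfold boxprod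
        rw [rmap_inf, rmap_inf, rmap_inf]
        exact le_inf (le_trans (inf_le_inf inf_le_left inf_le_left) TA)
          (le_trans (inf_le_inf inf_le_right inf_le_right) TB)
    refine ⟨hbox, inf_le_left, inf_le_right, ?_⟩
    intro T τ hτ h k hh hk
    refine ⟨prod.lift h k, ?_, ?_, ?_, ?_⟩
    · unfold QHomC boxprod at *
      rw [rmap_inf, ← rmap_comp, ← rmap_comp]
      have e1 : prod.map (prod.lift h k) (prod.lift h k) ≫ prod.map prod.fst prod.fst =
          prod.map h h := by apply Limits.prod.hom_ext <;> simp [prod.lift_fst, prod.lift_snd, prod.lift_fst_assoc, prod.lift_snd_assoc]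
      have e2 : prod.map (prod.lift h k) (prod.lift h k) ≫ prod.map prod.snd prod.snd =
          prod.map k k := by apply Limits.prod.hom_ext <;> simp [prod.lift_fst, prod.lift_snd, prod.lift_fst_assoc, prod.lift_snd_assoc]
      rw [e1, e2]
      exact le_inf hh hk
    · rw [prod.lift_fst]; exact qeq_refl hE hρ.refl h
    · rw [prod.lift_snd]; exact qeq_refl hE hσ.refl k
    · intro m' hm' h1 h2
      have s1 := qeq_symm hρ.symm h1
      have s2 := qeq_symm hσ.symm h2
      unfold QEq boxprod at *
      rw [rmap_inf, ← rmap_comp, ← rmap_comp]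
      have e1 : prod.lift (prod.lift h k) m' ≫ prod.map prod.fst prod.fst =
          prod.lift h (m' ≫ prod.fst) := by apply Limits.prod.hom_ext <;> simp [prod.lift_fst, prod.lift_snd, prod.lift_fst_assoc, prod.lift_snd_assoc]
      have e2 : prod.lift (prod.lift h k) m' ≫ prod.map prod.snd prod.snd =
          prod.lift k (m' ≫ prod.snd) := by apply Limits.prod.hom_ext <;> simp [prod.lift_fst, prod.lift_snd, prod.lift_fst_assoc, prod.lift_snd_assoc]
      rw [e1, e2, s1, s2, top_inf_eq]

end DoctrinePaper
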